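/- In a conformally flat weakly Ricci symmetric manifold of dimension n > 3 with nonsingular Ricci tensor, the covector A − B is closed. -/

import Mathlib

open Finset

theorem wrs_conformally_flat_closed {ι : Type*} [Fintype ι] [DecidableEq ι]
    (R : ι → ι → ι → ι → ℝ)            -- R a b c d = R_{abc}{}^d
    (DR : ι → ι → ι → ι → ι → ℝ)        -- DR x a b c d = ∇_x R_{abc}{}^d
    (D2R : ι → ι → ι → ι → ι → ι → ℝ)   -- D2R x y a b c d = ∇_x ∇_y R_{abc}{}^d
    (hAnti : ∀ a b c d, R a b c d = - R b a c d)
    (hDAnti : ∀ x a b c d, DR x a b c d = - DR x b a c d)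
    (hD2Anti : ∀ x y a b c d, D2R x y a b c d = - D2R x y b a c d)
    (hB1 : ∀ a b c d, R a b c d + R b c a d + R c a b d = 0)
    (hB2 : ∀ a b c d e, DR a b c d e + DR b c a d e + DR c a b d e = 0)
    (hDB2 : ∀ x a b c d e,
      D2R x a b c d e + D2R x b c a d e + D2R x c a b d e = 0)
    (hComm : ∀ x y c d e f,
      D2R x y c d e f - D2R y x c d e f =
        - (∑ k, R x y c k * R k d e f) - (∑ k, R x y d k * R c k e f)
        - (∑ k, R x y e k * R c d k f) + (∑ k, R x y k f * R c d e k))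
    (g ginv : ι → ι → ℝ)
    (hg : ∀ a b, g a b = g b a)
    (hginvsym : ∀ a b, ginv a b = ginv b a)
    (hginv : ∀ a b, (∑ m, ginv a m * g m b) = if a = b then (1:ℝ) else 0)
    (hPair : ∀ a b c d, (∑ e, R a b c e * g e d) = ∑ e, R c d a e * g e b)
    (Ric : ι → ι → ℝ) (hRicdef : ∀ a b, Ric a b = ∑ m, R a m b m)
    (hRicSym : ∀ a b, Ric a b = Ric b a)
    (hRicNe : Ric ≠ 0)
    (Acov Bcov Dcov : ι → ℝ)
    (hAne : Acov ≠ 0) (hBne : Bcov ≠ 0) (hDne : Dcov ≠ 0)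
    (hWRS : ∀ x b c, (∑ m, DR x b m c m)
      = Acov x * Ric b c + Bcov b * Ric x c + Dcov c * Ric x b)
    (DA DB DD : ι → ι → ℝ)
    (hWRS2 : ∀ x a b c, (∑ m, D2R x a b m c m)
      = DA x a * Ric b c + Acov a * (∑ m, DR x b m c m)
        + DB x b * Ric a c + Bcov b * (∑ m, DR x a m c m)
        + DD x c * Ric a b + Dcov c * (∑ m, DR x a m b m))
    (hn : 3 < Fintype.card ι)
    (hdet : (Matrix.of fun a b => ∑ k, ginv a k * Ric k b).det ≠ 0)
    (S : ℝ) (hSdef : S = ∑ p, ∑ q, ginv p q * Ric p q)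
    (DS : ι → ℝ)
    (hDSdef : ∀ x, DS x = ∑ p, ∑ q, ginv p q * (∑ m, DR x p m q m))
    (D2S : ι → ι → ℝ)
    (hD2Sdef : ∀ x y, D2S x y = ∑ p, ∑ q, ginv p q * (∑ m, D2R x y p m q m))
    (hCF : ∀ a b c d,
      R a b c d
      + (1 / ((Fintype.card ι : ℝ) - 2)) *
          ((if a = d then (1:ℝ) else 0) * Ric b c
           - (if b = d then (1:ℝ) else 0) * Ric a c
           + (∑ e, Ric a e * ginv e d) * g b c
           - (∑ e, Ric b e * ginv e d) * g a c)
      - (S / (((Fintype.card ι : ℝ) - 1) * ((Fintype.card ι : ℝ) - 2))) *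
          ((if a = d then (1:ℝ) else 0) * g b c
           - (if b = d then (1:ℝ) else 0) * g a c) = 0)
    (hCF1 : ∀ x a b c d,
      DR x a b c d
      + (1 / ((Fintype.card ι : ℝ) - 2)) *
          ((if a = d then (1:ℝ) else 0) * (∑ m, DR x b m c m)
           - (if b = d then (1:ℝ) else 0) * (∑ m, DR x a m c m)
           + (∑ e, (∑ m, DR x a m e m) * ginv e d) * g b c
           - (∑ e, (∑ m, DR x b m e m) * ginv e d) * g a c)
      - (DS x / (((Fintype.card ι : ℝ) - 1) * ((Fintype.card ι : ℝ) - 2))) *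
          ((if a = d then (1:ℝ) else 0) * g b c
           - (if b = d then (1:ℝ) else 0) * g a c) = 0)
    (hCF2 : ∀ x y a b c d,
      D2R x y a b c d
      + (1 / ((Fintype.card ι : ℝ) - 2)) *
          ((if a = d then (1:ℝ) else 0) * (∑ m, D2R x y b m c m)
           - (if b = d then (1:ℝ) else 0) * (∑ m, D2R x y a m c m)
           + (∑ e, (∑ m, D2R x y a m e m) * ginv e d) * g b c
           - (∑ e, (∑ m, D2R x y b m e m) * ginv e d) * g a c)
      - (D2S x y / (((Fintype.card ι : ℝ) - 1) * ((Fintype.card ι : ℝ) - 2))) *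
          ((if a = d then (1:ℝ) else 0) * g b c
           - (if b = d then (1:ℝ) else 0) * g a c) = 0) :
    ∀ a b, DA a b - DB a b = DA b a - DB b a := by
  classical
  -- abbreviations
  have hstep1 : ∀ x a b c : ι,
      (∑ m, D2R x a b m c m) - (∑ m, D2R a x b m c m)
        = -(∑ k, R x a b k * Ric k c) - (∑ k, R x a c k * Ric b k) := by
    intro x a b c
    have h1 : (∑ m, D2R x a b m c m) - (∑ m, D2R a x b m c m)
        = ∑ m, (D2R x a b m c m - D2R a x b m c m) := by
      rw [Finset.sum_sub_distrib]
    rw [h1, Finset.sum_congr rfl fun m _ => hComm x a b m c m]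
    have h2 : ∑ m, (- (∑ k, R x a b k * R k m c m) - (∑ k, R x a m k * R b k c m)
        - (∑ k, R x a c k * R b m k m) + (∑ k, R x a k m * R b m c k))
        = -(∑ m, ∑ k, R x a b k * R k m c m) - (∑ m, ∑ k, R x a m k * R b k c m)
          - (∑ m, ∑ k, R x a c k * R b m k m) + (∑ m, ∑ k, R x a k m * R b m c k) := by
      simp [Finset.sum_add_distrib, Finset.sum_sub_distrib]
    rw [h2]
    have e1 : (∑ m, ∑ k, R x a b k * R k m c m) = ∑ k, R x a b k * Ric k c := by
      rw [Finset.sum_comm]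
      exact Finset.sum_congr rfl fun k _ => by rw [← Finset.mul_sum, ← hRicdef]
    have e3 : (∑ m, ∑ k, R x a c k * R b m k m) = ∑ k, R x a c k * Ric b k := by
      rw [Finset.sum_comm]
      exact Finset.sum_congr rfl fun k _ => by rw [← Finset.mul_sum, ← hRicdef]
    have e24 : (∑ m, ∑ k, R x a m k * R b k c m) = ∑ m, ∑ k, R x a k m * R b m c k := by
      rw [Finset.sum_comm]
    rw [e1, e3, e24]
    ring
  -- symmetry of the quadratic Ricci contraction
  have hQsym : ∀ p b : ι, (∑ k, (∑ e, Ric p e * ginv e k) * Ric b k)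
      = ∑ k, (∑ e, Ric b e * ginv e k) * Ric p k := by
    intro p b
    calc (∑ k, (∑ e, Ric p e * ginv e k) * Ric b k)
        = ∑ k, ∑ e, Ric p e * ginv e k * Ric b k := by
          simp [Finset.sum_mul]
      _ = ∑ e, ∑ k, Ric p e * ginv e k * Ric b k := Finset.sum_comm
      _ = ∑ k, (∑ e, Ric b e * ginv e k) * Ric p k := by
          refine Finset.sum_congr rfl fun k _ => ?_
          rw [Finset.sum_mul]
          refine Finset.sum_congr rfl fun e _ => ?_
          rw [hginvsym k e, hRicSym p k, hRicSym b e]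
          ring
  -- contracted conformal flatness
  have L1 : ∀ p q cc bb : ι, (∑ k, R p q cc k * Ric bb k)
      = -(1 / ((Fintype.card ι : ℝ) - 2)) * (Ric q cc * Ric bb p - Ric p cc * Ric bb q
          + g q cc * (∑ k, (∑ e, Ric p e * ginv e k) * Ric bb k)
          - g p cc * (∑ k, (∑ e, Ric q e * ginv e k) * Ric bb k))
        + (S / (((Fintype.card ι : ℝ) - 1) * ((Fintype.card ι : ℝ) - 2))) *
            (g q cc * Ric bb p - g p cc * Ric bb q) := by
    intro p q cc bb
    have h : ∀ k, R p q cc k * Ric bb k =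
        -(1 / ((Fintype.card ι : ℝ) - 2)) *
          ((if p = k then (1:ℝ) else 0) * (Ric q cc * Ric bb k)
            - (if q = k then (1:ℝ) else 0) * (Ric p cc * Ric bb k)
            + g q cc * ((∑ e, Ric p e * ginv e k) * Ric bb k)
            - g p cc * ((∑ e, Ric q e * ginv e k) * Ric bb k))
        + (S / (((Fintype.card ι : ℝ) - 1) * ((Fintype.card ι : ℝ) - 2))) *
          ((if p = k then (1:ℝ) else 0) * (g q cc * Ric bb k)
            - (if q = k then (1:ℝ) else 0) * (g p cc * Ric bb k)) := by
      intro k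
      linear_combination Ric bb k * hCF p q cc k
    rw [Finset.sum_congr rfl fun k _ => h k]
    simp only [Finset.sum_add_distrib, Finset.sum_sub_distrib, ← Finset.mul_sum,
      ite_mul, one_mul, zero_mul, Finset.sum_ite_eq, Finset.mem_univ, if_true]
  -- step 2 : cyclic curvature contraction vanishes
  have hstep2 : ∀ x a b c : ι,
      (∑ k, R x a b k * Ric k c) + (∑ k, R x a c k * Ric b k)
      + (∑ k, R a b x k * Ric k c) + (∑ k, R a b c k * Ric x k)
      + (∑ k, R b x a k * Ric k c) + (∑ k, R b x c k * Ric a k) = 0 := by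
    intro x a b c
    have h135 : (∑ k, R x a b k * Ric k c) + (∑ k, R a b x k * Ric k c)
        + (∑ k, R b x a k * Ric k c) = 0 := by
      rw [← Finset.sum_add_distrib, ← Finset.sum_add_distrib]
      exact Finset.sum_eq_zero fun k _ => by linear_combination Ric k c * hB1 x a b k
    have h246 : (∑ k, R x a c k * Ric b k) + (∑ k, R a b c k * Ric x k)
        + (∑ k, R b x c k * Ric a k) = 0 := by
      rw [L1 x a c b, L1 a b c x, L1 b x c a]
      linear_combination
        (-(1 / ((Fintype.card ι : ℝ) - 2)) * Ric a c
            + (S / (((Fintype.card ι : ℝ) - 1) * ((Fintype.card ι : ℝ) - 2))) * g a c)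
          * hRicSym b x
        + (-(1 / ((Fintype.card ι : ℝ) - 2)) * Ric b c
            + (S / (((Fintype.card ι : ℝ) - 1) * ((Fintype.card ι : ℝ) - 2))) * g b c)
          * hRicSym x a
        + (-(1 / ((Fintype.card ι : ℝ) - 2)) * Ric x c
            + (S / (((Fintype.card ι : ℝ) - 1) * ((Fintype.card ι : ℝ) - 2))) * g x c)
          * hRicSym a b
        - (1 / ((Fintype.card ι : ℝ) - 2)) * g a c * hQsym x b
        - (1 / ((Fintype.card ι : ℝ) - 2)) * g b c * hQsym a x
        - (1 / ((Fintype.card ι : ℝ) - 2)) * g x c * hQsym b a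
    linarith
  -- the key algebraic identity
  have key : ∀ x a b c : ι,
      ((DA x a - DA a x) - (DB x a - DB a x)) * Ric b c
      + ((DA a b - DA b a) - (DB a b - DB b a)) * Ric x c
      + ((DA b x - DA x b) - (DB b x - DB x b)) * Ric a c = 0 := by
    intro x a b c
    have e1 := hstep1 x a b c
    have e2 := hstep1 a b x c
    have e3 := hstep1 b x a c
    have e4 := hstep2 x a b c
    have ebig : (∑ m, D2R x a b m c m) - (∑ m, D2R a x b m c m)
        + ((∑ m, D2R a b x m c m) - (∑ m, D2R b a x m c m))
        + ((∑ m, D2R b x a m c m) - (∑ m, D2R x b a m c m)) = 0 := by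
      rw [e1, e2, e3]; linarith
    simp only [hWRS2, hWRS] at ebig
    linear_combination ebig + (Dcov a * Dcov c + DD a c) * hRicSym x b
      + (Dcov b * Dcov c + DD b c) * hRicSym a x
      + (Dcov c * Dcov x + DD x c) * hRicSym b a
  -- Ricci tensor is invertible as a matrix
  have hdetR : IsUnit (Matrix.of Ric).det := by
    have hprod : (Matrix.of fun a b => ∑ k, ginv a k * Ric k b)
        = (Matrix.of ginv) * (Matrix.of Ric) := by
      ext a b
      simp [Matrix.mul_apply]
    rw [hprod, Matrix.det_mul] at hdet
    exact isUnit_iff_ne_zero.mpr (right_ne_zero_of_mul hdet)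
  have hinv : ∀ u v : ι, (∑ cc, Ric u cc * (Matrix.of Ric)⁻¹ cc v)
      = if u = v then (1:ℝ) else 0 := by
    intro u v
    have h := Matrix.mul_nonsing_inv (Matrix.of Ric) hdetR
    have h2 := congrFun (congrFun h u) v
    simpa [Matrix.mul_apply, Matrix.one_apply] using h2
  -- contraction with the inverse Ricci tensor
  have hfin : ∀ u v : ι, (Fintype.card ι : ℝ) *
      ((DA u v - DA v u) - (DB u v - DB v u))
      + 2 * ((DA v u - DA u v) - (DB v u - DB u v)) = 0 := by
    intro u v
    have h0 : (∑ b, ∑ cc,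
        (((DA u v - DA v u) - (DB u v - DB v u)) * Ric b cc
          + ((DA v b - DA b v) - (DB v b - DB b v)) * Ric u cc
          + ((DA b u - DA u b) - (DB b u - DB u b)) * Ric v cc)
          * (Matrix.of Ric)⁻¹ cc b) = 0 := by
      refine Finset.sum_eq_zero fun b _ => Finset.sum_eq_zero fun cc _ => ?_
      rw [key u v b cc, zero_mul]
    have h1 : (∑ b, ∑ cc,
        (((DA u v - DA v u) - (DB u v - DB v u)) * Ric b cc
          + ((DA v b - DA b v) - (DB v b - DB b v)) * Ric u cc
          + ((DA b u - DA u b) - (DB b u - DB u b)) * Ric v cc)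
          * (Matrix.of Ric)⁻¹ cc b)
        = (Fintype.card ι : ℝ) * ((DA u v - DA v u) - (DB u v - DB v u))
          + ((DA v u - DA u v) - (DB v u - DB u v))
          + ((DA v u - DA u v) - (DB v u - DB u v)) := by
      have hsplit : ∀ b : ι, (∑ cc,
          (((DA u v - DA v u) - (DB u v - DB v u)) * Ric b cc
            + ((DA v b - DA b v) - (DB v b - DB b v)) * Ric u cc
            + ((DA b u - DA u b) - (DB b u - DB u b)) * Ric v cc)
            * (Matrix.of Ric)⁻¹ cc b)
          = ((DA u v - DA v u) - (DB u v - DB v u)) * (if b = b then (1:ℝ) else 0)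
            + ((DA v b - DA b v) - (DB v b - DB b v)) * (if u = b then (1:ℝ) else 0)
            + ((DA b u - DA u b) - (DB b u - DB u b)) * (if v = b then (1:ℝ) else 0) := by
        intro b
        rw [← hinv b b, ← hinv u b, ← hinv v b]
        simp only [Finset.mul_sum, ← Finset.sum_add_distrib]
        exact Finset.sum_congr rfl fun cc _ => by ring
      rw [Finset.sum_congr rfl fun b _ => hsplit b]
      simp [Finset.sum_add_distrib, mul_ite, mul_one, mul_zero, Finset.sum_ite_eq,
        Finset.card_univ, mul_comm]
      ring
    rw [h1] at h0
    linarith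
  -- conclude
  intro a b
  have h1 := hfin a b
  have h4 : (4:ℝ) ≤ (Fintype.card ι : ℝ) := by exact_mod_cast hn
  have h2 : ((Fintype.card ι : ℝ) - 2) * ((DA a b - DA b a) - (DB a b - DB b a)) = 0 := by
    linarith
  have h3 : (DA a b - DA b a) - (DB a b - DB b a) = 0 := by
    have hne : (Fintype.card ι : ℝ) - 2 ≠ 0 := by linarith
    exact (mul_eq_zero.mp h2).resolve_left hne
  linarith
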